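/- For every complex number x and y, the 4×4 Hermitian matrix M = [[1,1,x,-1],[1,1,1,y],[conj(x),1,1,1],[-1,conj(y),1,1]] is not positive semidefinite. -/
import Mathlib


open Matrix ComplexOrder

/-- For all `x, y : ℂ`, the matrix `[[1,1,x,-1],[1,1,1,y],[x̄,1,1,1],[-1,ȳ,1,1]]`
is not positive semidefinite. -/
theorem stmt4 (x y : ℂ) :
    ¬ (!![1, 1, x, -1; 1, 1, 1, y; star x, 1, 1, 1; -1, star y, 1, 1] :
        Matrix (Fin 4) (Fin 4) ℂ).PosSemidef := by
  intro h
  have h1 := (h.dotProduct_mulVec_zero_iff ![1, -1, 0, 0]).mp (by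
    simp [mulVec, dotProduct, Fin.sum_univ_four])
  have h2 := (h.dotProduct_mulVec_zero_iff ![0, 0, 1, -1]).mp (by
    simp [mulVec, dotProduct, Fin.sum_univ_four, Matrix.vecHead, Matrix.vecTail])
  have e1 := congrFun h1 2
  have e2 := congrFun h2 0
  simp [mulVec, dotProduct, Fin.sum_univ_four] at e1 e2
  have hx1 : x = 1 := by
    have := congrArg star e1
    simp at this
    linear_combination this
  rw [hx1] at e2
  norm_num at e2
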